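/- arXiv:2207.02664 — 2 statements merged into one kernel-verified Lean document; each statement's English description precedes it below -/
import Mathlib

section
/- Consider the real quadratic form B(x) = Σ_{i,j=1}^n a_{ij}(x_i − x_j)² with a_{ij} = a_{ji} ∈ ℝ, and let p be its positive index of inertia. Let H be the hypergraph on {1,...,n} whose edges correspond to pairs {i,j} with a_{ij} ≠ 0, let H′ be the subhypergraph corresponding to pairs with a_{ij} > 0, and let T be any spanning hyperforest of H′. Then p ≤ Σ_{e∈E(T)}(|e|−1) ≤ Σ_{e∈E(H′)}(|e|−1) ≤ p + l, where l = l(H) = Σ_{e∈E(H)}(|e|−1) − |V(H)| + c(H) is the cyclomatic number of H and c(H) its number of connected components. -/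
attribute [local instance] Classical.propDecidable

open Finset Matrix

/-! ## Signed hypergraphs (edges indexed by a type `E`; `sign v e ∈ {0, 1, -1}`,
nonzero exactly on incidences) -/

structure SignedHypergraph (V E : Type) where
  sign : V → E → ℝ
  sign_values : ∀ v e, sign v e = 0 ∨ sign v e = 1 ∨ sign v e = -1

namespace SignedHypergraph

variable {V E : Type} [Fintype V] [Fintype E] [DecidableEq V] [DecidableEq E]

/-- The vertex set of an edge. -/
noncomputable def edgeVerts (G : SignedHypergraph V E) (e : E) : Finset V :=
  Finset.univ.filter fun v => G.sign v e ≠ 0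

/-- The degree of a vertex. -/
noncomputable def deg (G : SignedHypergraph V E) (v : V) : ℕ :=
  (Finset.univ.filter fun e : E => G.sign v e ≠ 0).card

/-- The sign of an edge: `sgn e = (-1)^(|e|-1) ∏_{v ∈ e} σ(v,e)`. -/
noncomputable def edgeSign (G : SignedHypergraph V E) (e : E) : ℝ :=
  (-1 : ℝ) ^ ((G.edgeVerts e).card - 1) * ∏ v ∈ G.edgeVerts e, G.sign v e

/-- The signed adjacency matrix. -/
noncomputable def adj (G : SignedHypergraph V E) : Matrix V V ℝ :=
  Matrix.of fun x y =>
    if x = y then 0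
    else ∑ e ∈ Finset.univ.filter (fun e : E => G.sign x e ≠ 0 ∧ G.sign y e ≠ 0), G.edgeSign e

/-- The normalized Laplacian `L = I - D⁻¹ A`. -/
noncomputable def lap (G : SignedHypergraph V E) : Matrix V V ℝ :=
  Matrix.of fun x y => (if x = y then (1 : ℝ) else 0) - G.adj x y / (G.deg x : ℝ)

/-- The degree-weighted inner product `⟨f, g⟩ = ∑ v deg(v) f(v) g(v)`. -/
noncomputable def dInner (G : SignedHypergraph V E) (f g : V → ℝ) : ℝ :=
  ∑ v : V, (G.deg v : ℝ) * f v * g v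

/-- Two vertices share an edge. -/
def Adjacent (G : SignedHypergraph V E) (x y : V) : Prop :=
  ∃ e : E, G.sign x e ≠ 0 ∧ G.sign y e ≠ 0

/-- The underlying hypergraph is connected. -/
def Connected (G : SignedHypergraph V E) : Prop :=
  ∀ x y : V, Relation.ReflTransGen G.Adjacent x y

/-- One step of a strong nodal domain path: `x, y` in a common edge `e` with
`f x · sgn e · f y > 0`. -/
def sStep (G : SignedHypergraph V E) (f : V → ℝ) (x y : V) : Prop :=
  ∃ e : E, G.sign x e ≠ 0 ∧ G.sign y e ≠ 0 ∧ 0 < f x * G.edgeSign e * f y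

/-- The number `𝔖(f)` of strong nodal domains: equivalence classes of the support of `f`
under joining by S-paths. -/
noncomputable def strongDomainCount (G : SignedHypergraph V E) (f : V → ℝ) : ℕ :=
  Set.ncard {D : Set V | ∃ w, f w ≠ 0 ∧ D = {x | Relation.ReflTransGen (G.sStep f) w x}}

/-- A weak nodal domain path: a walk along edges such that any two consecutive nonzeros
`v i`, `v j` of `f` (joined through zeros by the edges `e i, …, e (j-1)`) satisfy
`f (v i) · sgn (e i) ⋯ sgn (e (j-1)) · f (v j) > 0`. -/
def IsWPath (G : SignedHypergraph V E) (f : V → ℝ) {ℓ : ℕ}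
    (v : Fin (ℓ + 1) → V) (e : Fin ℓ → E) : Prop :=
  (∀ t : Fin ℓ, G.sign (v t.castSucc) (e t) ≠ 0 ∧ G.sign (v t.succ) (e t) ≠ 0) ∧
  ∀ i j : Fin (ℓ + 1), i < j → f (v i) ≠ 0 → f (v j) ≠ 0 →
    (∀ k : Fin (ℓ + 1), i < k → k < j → f (v k) = 0) →
    0 < f (v i) *
        (∏ t : Fin ℓ, if (i : ℕ) ≤ (t : ℕ) ∧ (t : ℕ) < (j : ℕ) then G.edgeSign (e t) else 1) *
        f (v j)

/-- `x` and `y` are joined by a W-path (or equal). -/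
def wRel (G : SignedHypergraph V E) (f : V → ℝ) (x y : V) : Prop :=
  x = y ∨ ∃ (ℓ : ℕ) (v : Fin (ℓ + 1) → V) (e : Fin ℓ → E),
    G.IsWPath f v e ∧ v 0 = x ∧ v (Fin.last ℓ) = y

/-- The weak nodal domain of a vertex `w` in the support of `f`: the equivalence class
of `w` under the W-path relation on the support, enlarged by the zero vertices
W-path-connected to it. -/
def weakDomain (G : SignedHypergraph V E) (f : V → ℝ) (w : V) : Set V :=
  {x | ∃ y, f y ≠ 0 ∧ G.wRel f w y ∧ G.wRel f x y}

def IsWeakNodalDomain (G : SignedHypergraph V E) (f : V → ℝ) (D : Set V) : Prop :=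
  ∃ w, f w ≠ 0 ∧ D = G.weakDomain f w

/-- The number `𝔚(f)` of weak nodal domains. -/
noncomputable def weakDomainCount (G : SignedHypergraph V E) (f : V → ℝ) : ℕ :=
  Set.ncard {D : Set V | G.IsWeakNodalDomain f D}

/-- The number of connected components of the subhypergraph induced on the vertex set `A`
with edges restricted to those satisfying `P`. -/
noncomputable def componentsOn (G : SignedHypergraph V E) (A : Finset V) (P : E → Prop) : ℕ :=
  Set.ncard {C : Set V | ∃ v ∈ A, C =
    {u | u ∈ A ∧ Relation.ReflTransGen
      (fun x y => x ∈ A ∧ y ∈ A ∧ ∃ e, P e ∧ G.sign x e ≠ 0 ∧ G.sign y e ≠ 0) v u}}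

/-- The cyclomatic number `l = ∑_e (|e|-1) - |V| + c` of the subhypergraph induced on `A`
with edges restricted to those satisfying `P`. -/
noncomputable def cyclomaticOn (G : SignedHypergraph V E) (A : Finset V) (P : E → Prop) : ℤ :=
  (∑ e ∈ Finset.univ.filter (fun e : E => P e ∧ (G.edgeVerts e ∩ A).Nonempty),
      (((G.edgeVerts e ∩ A).card : ℤ) - 1)) -
    (A.card : ℤ) + (G.componentsOn A P : ℤ)

/-- An edge all of whose pairs of (distinct) vertices `x, y` satisfy
`f x · sgn e · f y > 0`. -/
def posEdge (G : SignedHypergraph V E) (f : V → ℝ) (e : E) : Prop :=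
  ∀ x y : V, G.sign x e ≠ 0 → G.sign y e ≠ 0 → x ≠ y → 0 < f x * G.edgeSign e * f y

/-- An edge of the subhypergraph `S` on the support of `f`. -/
def sEdge (G : SignedHypergraph V E) (f : V → ℝ) (e : E) : Prop :=
  (∀ v, G.sign v e ≠ 0 → f v ≠ 0) ∧ G.posEdge f e

/-- The subhypergraph with edge set `P` contains a cycle. -/
def HasCycle (G : SignedHypergraph V E) (P : E → Prop) : Prop :=
  ∃ (q : ℕ) (v : Fin (q + 1) → V) (e : Fin q → E), 2 ≤ q ∧
    Function.Injective (fun t : Fin q => v t.castSucc) ∧ Function.Injective e ∧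
    v (Fin.last q) = v 0 ∧
    ∀ t : Fin q, P (e t) ∧ G.sign (v t.castSucc) (e t) ≠ 0 ∧ G.sign (v t.succ) (e t) ≠ 0

/-- A tree-like vertex: its removal increases the number of connected components
by `deg x - 1`. -/
def Treelike (G : SignedHypergraph V E) (x : V) : Prop :=
  (G.componentsOn (Finset.univ.erase x) (fun _ => True) : ℤ) =
    (G.componentsOn Finset.univ (fun _ => True) : ℤ) + (G.deg x : ℤ) - 1

/-- The Fiedler zero set of `f`: zeros `x` of `f` such that either all vertices sharing an
edge with `x` are zeros, or `x` is not tree-like. -/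
def fiedlerSet (G : SignedHypergraph V E) (f : V → ℝ) : Set V :=
  {x | f x = 0 ∧ ((∀ y, G.Adjacent x y → f y = 0) ∨ ¬ G.Treelike x)}

/-- Weak deletion of the vertices in `R`: each vertex of `R` is removed from every hyperedge
(possibly creating empty edges). -/
def weakDelete (G : SignedHypergraph V E) (R : Finset V) :
    SignedHypergraph {v : V // v ∉ R} E :=
  ⟨fun v e => G.sign v.1 e, fun v e => G.sign_values v.1 e⟩

end SignedHypergraph

/-! ## Plain hypergraphs -/

structure PlainHypergraph (V : Type) where
  verts : Finset V
  edges : Finset (Finset V)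
  edge_subset : ∀ e ∈ edges, e ⊆ verts

namespace PlainHypergraph

variable {V : Type} [DecidableEq V]

def Adjacent (H : PlainHypergraph V) (x y : V) : Prop := ∃ e ∈ H.edges, x ∈ e ∧ y ∈ e

def Connected (H : PlainHypergraph V) : Prop :=
  ∀ x ∈ H.verts, ∀ y ∈ H.verts, Relation.ReflTransGen H.Adjacent x y

/-- A cycle: an alternating closed sequence of distinct vertices and distinct edges
`v 0, e 0, v 1, e 1, …, v q = v 0` of length `q ≥ 2` with `v t, v (t+1) ∈ e t`. -/
def IsCycle (H : PlainHypergraph V) {q : ℕ} (v : Fin (q + 1) → V) (e : Fin q → Finset V) : Prop :=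
  2 ≤ q ∧ Function.Injective (fun t : Fin q => v t.castSucc) ∧ Function.Injective e ∧
    v (Fin.last q) = v 0 ∧
    ∀ t : Fin q, e t ∈ H.edges ∧ v t.castSucc ∈ e t ∧ v t.succ ∈ e t

def Acyclic (H : PlainHypergraph V) : Prop :=
  ¬ ∃ (q : ℕ) (v : Fin (q + 1) → V) (e : Fin q → Finset V), H.IsCycle v e

/-- The number of connected components. -/
noncomputable def ncomp (H : PlainHypergraph V) : ℕ :=
  Set.ncard {C : Set V | ∃ v ∈ H.verts, C = {u | Relation.ReflTransGen H.Adjacent v u}}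

/-- The cyclomatic number `l(H) = ∑_e (|e|-1) - |V| + c(H)`. -/
noncomputable def cyclomatic (H : PlainHypergraph V) : ℤ :=
  (∑ e ∈ H.edges, ((e.card : ℤ) - 1)) - (H.verts.card : ℤ) + (H.ncomp : ℤ)

def degree (H : PlainHypergraph V) (x : V) : ℕ := (H.edges.filter fun e => x ∈ e).card

/-- The subhypergraph induced by a vertex set `A`: edges `e ∩ A` for `e ∩ A ≠ ∅`. -/
def induced (H : PlainHypergraph V) (A : Finset V) : PlainHypergraph V where
  verts := H.verts ∩ A
  edges := (H.edges.filter fun e => (e ∩ A).Nonempty).image fun e => e ∩ A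
  edge_subset := by
    intro e' he'
    simp only [Finset.mem_image, Finset.mem_filter] at he'
    obtain ⟨e, ⟨heE, -⟩, rfl⟩ := he'
    intro x hx
    rcases Finset.mem_inter.mp hx with ⟨hxe, hxA⟩
    exact Finset.mem_inter.mpr ⟨H.edge_subset e heE hxe, hxA⟩

/-- A tree-like vertex: deleting it (induced subhypergraph on the remaining vertices)
increases the number of connected components by `deg x - 1`. -/
def Treelike (H : PlainHypergraph V) (x : V) : Prop :=
  ((H.induced (H.verts.erase x)).ncomp : ℤ) = (H.ncomp : ℤ) + (H.degree x : ℤ) - 1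

/-- Removal of a vertex together with all edges incident to it. -/
def deleteVert (H : PlainHypergraph V) (y : V) : PlainHypergraph V where
  verts := H.verts.erase y
  edges := H.edges.filter fun e => y ∉ e
  edge_subset := by
    intro e he
    rcases Finset.mem_filter.mp he with ⟨heE, hy⟩
    intro x hx
    exact Finset.mem_erase.mpr ⟨fun h => hy (h ▸ hx), H.edge_subset e heE hx⟩

/-- A spanning hyperforest of `H`: a maximal acyclic spanning subhypergraph. -/
def IsSpanningHyperforest (H T : PlainHypergraph V) : Prop :=
  T.verts = H.verts ∧ T.edges ⊆ H.edges ∧ T.Acyclic ∧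
    ∀ T' : PlainHypergraph V, T'.verts = H.verts → T'.edges ⊆ H.edges → T'.Acyclic →
      T.edges ⊆ T'.edges → T'.edges = T.edges

end PlainHypergraph

/-- The positive index of inertia of a real matrix: the number of positive roots of its
characteristic polynomial, counted with multiplicity. -/
noncomputable def posInertia {m : Type} [Fintype m] [DecidableEq m] (M : Matrix m m ℝ) : ℕ :=
  (M.charpoly.roots.filter fun x => 0 < x).card

/-- The bordered matrix `[[B, a], [aᵀ, b]]`. -/
def borderMatrix {n : ℕ} (B : Matrix (Fin n) (Fin n) ℝ) (a : Fin n → ℝ) (b : ℝ) :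
    Matrix (Fin n ⊕ Unit) (Fin n ⊕ Unit) ℝ :=
  Matrix.fromBlocks B (Matrix.of fun i _ => a i) (Matrix.of fun _ j => a j)
    (Matrix.of fun _ _ => b)

namespace Stmt12Aux

open Polynomial

variable {n : ℕ}

lemma charpoly_conj (U M V : Matrix (Fin n) (Fin n) ℝ) (hUV : U * V = 1) :
    (U * M * V).charpoly = M.charpoly := by
  have hmap : ∀ A B : Matrix (Fin n) (Fin n) ℝ,
      (A * B).map (C : ℝ →+* ℝ[X]) = A.map C * B.map C := fun A B => Matrix.map_mul
  have h1 : (U.map (C : ℝ →+* ℝ[X])) * (V.map C) = 1 := by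
    rw [← hmap, hUV]; simp [Matrix.map_one]
  have h2 : (V.map (C : ℝ →+* ℝ[X])) * (U.map C) = 1 := by
    rw [← hmap, mul_eq_one_comm.mp hUV]; simp [Matrix.map_one]
  have key : charmatrix (U * M * V) = U.map C * charmatrix M * V.map C := by
    show Matrix.scalar (Fin n) (X : ℝ[X]) - (C : ℝ →+* ℝ[X]).mapMatrix (U * M * V)
      = U.map C * (Matrix.scalar (Fin n) (X : ℝ[X]) - (C : ℝ →+* ℝ[X]).mapMatrix M) * V.map C
    simp only [RingHom.mapMatrix_apply, Matrix.mul_sub, Matrix.sub_mul]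
    congr 1
    · rw [Matrix.scalar_apply, ← Matrix.smul_one_eq_diagonal, Matrix.mul_smul, Matrix.smul_mul,
        Matrix.mul_one, h1]
    · rw [hmap, hmap]
  have h3 : (V.map (C : ℝ →+* ℝ[X])).det * (U.map C).det = 1 := by
    rw [← Matrix.det_mul, h2, Matrix.det_one]
  unfold Matrix.charpoly
  rw [key, Matrix.det_mul, Matrix.det_mul]
  calc (U.map (C : ℝ →+* ℝ[X])).det * (charmatrix M).det * (V.map C).det
      = (charmatrix M).det * ((V.map (C : ℝ →+* ℝ[X])).det * (U.map C).det) := by ring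
    _ = (charmatrix M).det := by rw [h3, mul_one]

lemma charpoly_eq_prod {M : Matrix (Fin n) (Fin n) ℝ} (hM : M.IsHermitian) :
    M.charpoly = ∏ i : Fin n, (X - C (hM.eigenvalues i)) := by
  have hU : (hM.eigenvectorUnitary : Matrix (Fin n) (Fin n) ℝ) *
      (star hM.eigenvectorUnitary : Matrix (Fin n) (Fin n) ℝ) = 1 := by
    exact_mod_cast hM.eigenvectorUnitary.2.2
  have h0 : M.charpoly = (Matrix.diagonal (RCLike.ofReal ∘ hM.eigenvalues) :
      Matrix (Fin n) (Fin n) ℝ).charpoly := by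
    conv_lhs => rw [hM.spectral_theorem]
    exact charpoly_conj _ _ _ hU
  rw [h0]
  have hdiag : (Matrix.diagonal (RCLike.ofReal ∘ hM.eigenvalues) :
      Matrix (Fin n) (Fin n) ℝ) = Matrix.diagonal hM.eigenvalues := by
    congr 1
  rw [hdiag, Matrix.charpoly_of_upperTriangular _ (Matrix.blockTriangular_diagonal _)]
  simp

lemma posInertia_eq_card {M : Matrix (Fin n) (Fin n) ℝ} (hM : M.IsHermitian) :
    posInertia M = Fintype.card {i : Fin n // 0 < hM.eigenvalues i} := by
  unfold posInertia
  rw [charpoly_eq_prod hM]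
  rw [Finset.prod_eq_multiset_prod]
  have : (Finset.univ.val.map fun i : Fin n => X - C (hM.eigenvalues i)) =
      (Finset.univ.val.map hM.eigenvalues).map fun a : ℝ => X - C a := by
    rw [Multiset.map_map]; rfl
  rw [this, Polynomial.roots_multiset_prod_X_sub_C]
  rw [Multiset.filter_map]
  rw [Multiset.card_map]
  rw [Fintype.card_subtype]
  rfl


section Quad

variable {M : Matrix (Fin n) (Fin n) ℝ}

noncomputable def evec (hM : M.IsHermitian) (i : Fin n) : Fin n → ℝ :=
  ⇑(hM.eigenvectorBasis i)

lemma inner_eq_dot (f g : EuclideanSpace ℝ (Fin n)) :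
    (inner ℝ f g : ℝ) = ⇑f ⬝ᵥ ⇑g := by
  simp only [PiLp.inner_apply, RCLike.inner_apply, conj_trivial]
  simp only [dotProduct]
  exact Finset.sum_congr rfl fun i _ => mul_comm _ _

variable (hM : M.IsHermitian)

lemma dot_ortho (i j : Fin n) : (evec hM i) ⬝ᵥ (evec hM j) = if i = j then 1 else 0 := by
  rw [evec, evec, ← inner_eq_dot]
  exact orthonormal_iff_ite.mp hM.eigenvectorBasis.orthonormal i j

lemma dot_decomp (x : Fin n → ℝ) : ∑ i : Fin n, ((evec hM i) ⬝ᵥ x) • (evec hM i) = x := by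
  have h := OrthonormalBasis.sum_repr' hM.eigenvectorBasis (WithLp.toLp 2 x : EuclideanSpace ℝ (Fin n))
  calc ∑ i : Fin n, ((evec hM i) ⬝ᵥ x) • (evec hM i)
      = ∑ i : Fin n, (inner ℝ (hM.eigenvectorBasis i) (WithLp.toLp 2 x : EuclideanSpace ℝ (Fin n)) : ℝ) •
        ⇑(hM.eigenvectorBasis i) := by
        refine Finset.sum_congr rfl fun i _ => ?_
        rw [inner_eq_dot]; rfl
    _ = x := by simpa only [WithLp.ofLp_sum, WithLp.ofLp_smul, WithLp.ofLp_toLp] using congrArg (fun v : EuclideanSpace ℝ (Fin n) => ⇑v) h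

lemma dot_sum_left {ι : Type*} (s : Finset ι) (f : ι → (Fin n → ℝ)) (w : Fin n → ℝ) :
    (∑ i ∈ s, f i) ⬝ᵥ w = ∑ i ∈ s, f i ⬝ᵥ w := by
  simp only [dotProduct, Finset.sum_apply, Finset.sum_mul]
  exact Finset.sum_comm

lemma dot_sum_right {ι : Type*} (s : Finset ι) (f : ι → (Fin n → ℝ)) (w : Fin n → ℝ) :
    w ⬝ᵥ (∑ i ∈ s, f i) = ∑ i ∈ s, w ⬝ᵥ f i := by
  simp only [dotProduct, Finset.sum_apply, Finset.mul_sum]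
  exact Finset.sum_comm

lemma quadform_eq_sum (x : Fin n → ℝ) :
    x ⬝ᵥ M.mulVec x = ∑ i : Fin n, hM.eigenvalues i * ((evec hM i) ⬝ᵥ x) ^ 2 := by
  have hx := dot_decomp hM x
  set c : Fin n → ℝ := fun i => evec hM i ⬝ᵥ x with hc
  have hMx : M.mulVec x = ∑ j : Fin n, (c j * hM.eigenvalues j) • evec hM j := by
    conv_lhs => rw [← hx]
    rw [← Matrix.mulVecLin_apply, map_sum]
    refine Finset.sum_congr rfl fun j _ => ?_
    rw [LinearMap.map_smul, Matrix.mulVecLin_apply]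
    show c j • (M *ᵥ ⇑(hM.eigenvectorBasis j)) = _
    rw [hM.mulVec_eigenvectorBasis, smul_smul, mul_comm]
    rfl
  conv_lhs => rw [hMx]
  conv_lhs => rw [← hx]
  rw [dot_sum_left]
  simp only [dot_sum_right, smul_dotProduct, dotProduct_smul, dot_ortho hM,
    smul_eq_mul, mul_ite, mul_one, mul_zero, Finset.sum_ite_eq', Finset.sum_ite_eq, Finset.mem_univ, if_true]
  refine Finset.sum_congr rfl fun i _ => by ring

lemma evec_cancel (x : Fin n → ℝ) (h : ∀ i, evec hM i ⬝ᵥ x = 0) : x = 0 := by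
  have hx := dot_decomp hM x
  rw [← hx]
  refine Finset.sum_eq_zero fun i _ => by rw [h i, zero_smul]

end Quad

section Inertia

variable {M : Matrix (Fin n) (Fin n) ℝ} (hM : M.IsHermitian)

include hM

/-- Coordinates (w.r.t. eigenbasis) indexed by a subtype, as a linear map from a submodule. -/
noncomputable def coordL (U : Submodule ℝ (Fin n → ℝ)) (P : Fin n → Prop) :
    U →ₗ[ℝ] ({i : Fin n // P i} → ℝ) where
  toFun x := fun k => evec hM k.1 ⬝ᵥ (x : Fin n → ℝ)
  map_add' x y := by
    funext k; simp [dotProduct_add]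
  map_smul' c x := by
    funext k; simp [dotProduct_smul]

lemma posInertia_add_finrank_le (K : Submodule ℝ (Fin n → ℝ))
    (hK : ∀ x ∈ K, x ⬝ᵥ M.mulVec x ≤ 0) :
    posInertia M + Module.finrank ℝ K ≤ n := by
  classical
  let L := coordL hM K (fun i => ¬ 0 < hM.eigenvalues i)
  have hinj : Function.Injective L := by
    refine (injective_iff_map_eq_zero L).mpr ?_
    intro x hx0
    have hc : ∀ i : Fin n, ¬ 0 < hM.eigenvalues i → evec hM i ⬝ᵥ (x : Fin n → ℝ) = 0 :=
      fun i hi => congrFun hx0 ⟨i, hi⟩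
    have hterm : ∀ i : Fin n,
        0 ≤ hM.eigenvalues i * (evec hM i ⬝ᵥ (x : Fin n → ℝ)) ^ 2 := by
      intro i
      by_cases hi : 0 < hM.eigenvalues i
      · exact mul_nonneg hi.le (sq_nonneg _)
      · rw [hc i hi]; simp
    have hzero : ∑ i : Fin n, hM.eigenvalues i * (evec hM i ⬝ᵥ (x : Fin n → ℝ)) ^ 2 = 0 := by
      refine le_antisymm ?_ (Finset.sum_nonneg fun i _ => hterm i)
      rw [← quadform_eq_sum hM]
      exact hK x.1 x.2
    have hall := (Finset.sum_eq_zero_iff_of_nonneg (fun i _ => hterm i)).mp hzero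
    have hcoord : ∀ i : Fin n, evec hM i ⬝ᵥ (x : Fin n → ℝ) = 0 := by
      intro i
      by_cases hi : 0 < hM.eigenvalues i
      · rcases mul_eq_zero.mp (hall i (Finset.mem_univ i)) with h | h
        · exact absurd h (ne_of_gt hi)
        · exact pow_eq_zero_iff (by norm_num) |>.mp h
      · exact hc i hi
    exact Subtype.ext (evec_cancel hM _ hcoord)
  have h1 : Module.finrank ℝ K ≤ Fintype.card {i : Fin n // ¬ 0 < hM.eigenvalues i} := by
    simpa [Module.finrank_fintype_fun_eq_card] using
      LinearMap.finrank_le_finrank_of_injective hinj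
  have h2 := posInertia_eq_card hM
  have h3 := Fintype.card_subtype_compl (fun i : Fin n => 0 < hM.eigenvalues i)
  have h4 := Fintype.card_subtype_le (fun i : Fin n => 0 < hM.eigenvalues i)
  simp only [Fintype.card_fin] at h3 h4
  omega

lemma finrank_le_posInertia_add (U Z : Submodule ℝ (Fin n → ℝ))
    (h1 : ∀ x ∈ U, 0 ≤ x ⬝ᵥ M.mulVec x)
    (h2 : ∀ x ∈ U, x ⬝ᵥ M.mulVec x = 0 → x ∈ Z) :
    Module.finrank ℝ U ≤ posInertia M + Module.finrank ℝ Z := by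
  classical
  let L := coordL hM U (fun i => 0 < hM.eigenvalues i)
  have hrank := LinearMap.finrank_range_add_finrank_ker L
  have hr : Module.finrank ℝ (LinearMap.range L) ≤
      Fintype.card {i : Fin n // 0 < hM.eigenvalues i} := by
    refine le_trans (Submodule.finrank_le _) ?_
    simp [Module.finrank_fintype_fun_eq_card]
  have hker : ∀ x : LinearMap.ker L, (x.1 : Fin n → ℝ) ∈ Z := by
    intro x
    have hx0 : L x.1 = 0 := x.2
    have hc : ∀ i : Fin n, 0 < hM.eigenvalues i →
        evec hM i ⬝ᵥ ((x : U) : Fin n → ℝ) = 0 := fun i hi => congrFun hx0 ⟨i, hi⟩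
    have hle : ((x : U) : Fin n → ℝ) ⬝ᵥ M.mulVec ((x : U) : Fin n → ℝ) ≤ 0 := by
      rw [quadform_eq_sum hM]
      refine Finset.sum_nonpos fun i _ => ?_
      by_cases hi : 0 < hM.eigenvalues i
      · rw [hc i hi]; simp
      · exact mul_nonpos_of_nonpos_of_nonneg (not_lt.mp hi) (sq_nonneg _)
    exact h2 _ (x.1).2 (le_antisymm hle (h1 _ (x.1).2))
  let J : LinearMap.ker L →ₗ[ℝ] Z :=
    { toFun := fun x => ⟨(x.1 : Fin n → ℝ), hker x⟩
      map_add' := fun x y => rfl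
      map_smul' := fun c x => rfl }
  have hJ : Function.Injective J := by
    intro x y hxy
    have h0 : ((J x : Z) : Fin n → ℝ) = ((J y : Z) : Fin n → ℝ) := congrArg Subtype.val hxy
    exact Subtype.ext (Subtype.ext h0)
  have hk : Module.finrank ℝ (LinearMap.ker L) ≤ Module.finrank ℝ Z :=
    LinearMap.finrank_le_finrank_of_injective hJ
  have h2' := posInertia_eq_card hM
  omega

end Inertia

end Stmt12Aux

namespace Stmt12Aux2

open Finset

variable {n : ℕ}

/-- difference map associated to chosen endpoints of edges -/
noncomputable def diffMap (s : Finset (Finset (Fin n))) (f g : {e // e ∈ s} → Fin n) :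
    (Fin n → ℝ) →ₗ[ℝ] ({e // e ∈ s} → ℝ) where
  toFun x := fun e => x (f e) - x (g e)
  map_add' x y := by funext e; simp only [Pi.add_apply]; ring
  map_smul' c x := by funext e; simp only [Pi.smul_apply, smul_eq_mul, RingHom.id_apply]; ring

lemma n_le_finrank_ker_add {ι : Type} [Fintype ι] (φ : (Fin n → ℝ) →ₗ[ℝ] (ι → ℝ)) :
    n ≤ Module.finrank ℝ (LinearMap.ker φ) + Fintype.card ι := by
  have h1 := LinearMap.finrank_range_add_finrank_ker φ
  have h2 : Module.finrank ℝ (LinearMap.range φ) ≤ Fintype.card ι := by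
    refine le_trans (Submodule.finrank_le _) ?_
    simp [Module.finrank_fintype_fun_eq_card]
  have h3 : Module.finrank ℝ (Fin n → ℝ) = n := by
    simp [Module.finrank_fintype_fun_eq_card]
  omega

lemma exists_pair_fun {s : Finset (Finset (Fin n))}
    (hs : ∀ e ∈ s, ∃ i j : Fin n, i ≠ j ∧ e = {i, j}) :
    ∃ f g : {e // e ∈ s} → Fin n, ∀ e : {e // e ∈ s},
      f e ≠ g e ∧ (e : Finset (Fin n)) = {f e, g e} := by
  choose f g h1 h2 using fun e : {e // e ∈ s} => hs e.1 e.2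
  exact ⟨f, g, fun e => ⟨h1 e, h2 e⟩⟩

lemma pair_eq_of_eq {x : Fin n → ℝ} {e : Finset (Fin n)} {p q : Fin n}
    (heq : e = {p, q}) (hpq : x p = x q) : ∀ u ∈ e, ∀ w ∈ e, x u = x w := by
  subst heq
  intro u hu w hw
  have hu' : u = p ∨ u = q := by simpa using hu
  have hw' : w = p ∨ w = q := by simpa using hw
  rcases hu' with rfl | rfl <;> rcases hw' with rfl | rfl <;> simp [hpq]

/-- the submodule of functions constant on the reflexive-transitive closure classes of `r` -/
def constOn (r : Fin n → Fin n → Prop) : Submodule ℝ (Fin n → ℝ) where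
  carrier := {x | ∀ u v, Relation.ReflTransGen r u v → x u = x v}
  add_mem' := fun hx hy u v h => by
    simp only [Pi.add_apply, hx u v h, hy u v h]
  zero_mem' := fun u v _ => rfl
  smul_mem' := fun c x hx u v h => by simp only [Pi.smul_apply, hx u v h]

lemma mem_constOn {r : Fin n → Fin n → Prop} {x : Fin n → ℝ} :
    x ∈ constOn r ↔ ∀ u v, Relation.ReflTransGen r u v → x u = x v := Iff.rfl

lemma finrank_constOn_le (r : Fin n → Fin n → Prop) :
    Module.finrank ℝ (constOn r) ≤
      Set.ncard {C : Set (Fin n) | ∃ v, C = {u | Relation.ReflTransGen r v u}} := by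
  classical
  set comps := {C : Set (Fin n) | ∃ v, C = {u | Relation.ReflTransGen r v u}} with hcomps
  have hfin : comps.Finite := Set.toFinite _
  haveI : Fintype comps := hfin.fintype
  have hrep : ∀ C : comps, ∃ v, (C : Set (Fin n)) = {u | Relation.ReflTransGen r v u} :=
    fun C => C.2
  choose rep hrepspec using hrep
  let L : constOn r →ₗ[ℝ] (comps → ℝ) :=
    { toFun := fun x C => (x : Fin n → ℝ) (rep C)
      map_add' := fun x y => rfl
      map_smul' := fun c x => rfl }
  have hinj : Function.Injective L := by
    refine (injective_iff_map_eq_zero L).mpr ?_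
    intro x hx0
    refine Subtype.ext (funext fun v => ?_)
    have hC : {u | Relation.ReflTransGen r v u} ∈ comps := ⟨v, rfl⟩
    have h1 := hrepspec ⟨_, hC⟩
    have hv : v ∈ {u | Relation.ReflTransGen r (rep ⟨_, hC⟩) u} := by
      rw [← h1]; exact Relation.ReflTransGen.refl
    have h2 := x.2 (rep ⟨_, hC⟩) v hv
    have h0 : (x : Fin n → ℝ) (rep ⟨_, hC⟩) = 0 := congrFun hx0 ⟨_, hC⟩
    show (x : Fin n → ℝ) v = 0
    rw [← h2, h0]
  calc Module.finrank ℝ (constOn r) ≤ Module.finrank ℝ (comps → ℝ) :=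
        LinearMap.finrank_le_finrank_of_injective hinj
    _ = Fintype.card comps := Module.finrank_fintype_fun_eq_card ℝ
    _ = comps.ncard := by rw [← Nat.card_eq_fintype_card, Nat.card_coe_set_eq]

section Graph

variable {V : Type} [DecidableEq V]

lemma cycle_connects (T : PlainHypergraph V)
    {q : ℕ} (v : Fin (q + 1) → V) (ed : Fin q → Finset V) (hq : 2 ≤ q)
    (hlast : v (Fin.last q) = v 0) (t₀ : Fin q)
    (hstep : ∀ t : Fin q, t ≠ t₀ → T.Adjacent (v t.castSucc) (v t.succ)) :
    Relation.ReflTransGen T.Adjacent (v t₀.succ) (v t₀.castSucc) := by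
  have ht₀q : (t₀ : ℕ) < q := t₀.2
  have hA : ∀ m, (t₀ : ℕ) + 1 ≤ m → ∀ hm2 : m ≤ q,
      Relation.ReflTransGen T.Adjacent (v t₀.succ) (v ⟨m, by omega⟩) := by
    intro m
    induction m with
    | zero => intro h1 _; omega
    | succ k ih =>
      intro h1 h2
      rcases Nat.lt_or_ge k ((t₀ : ℕ) + 1) with h | h
      · have hk : k = (t₀ : ℕ) := by omega
        have he : (⟨k + 1, by omega⟩ : Fin (q + 1)) = t₀.succ := by
          ext; simp [hk]
        rw [he]
      · have hkq : k < q := by omega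
        refine (ih h (by omega)).tail ?_
        have hne : (⟨k, hkq⟩ : Fin q) ≠ t₀ := by
          intro hc
          have := congrArg Fin.val hc
          simp at this; omega
        have := hstep ⟨k, hkq⟩ hne
        simpa [Fin.castSucc_mk, Fin.succ_mk] using this
  have hB : ∀ m, ∀ hm : m ≤ (t₀ : ℕ),
      Relation.ReflTransGen T.Adjacent (v 0) (v ⟨m, by omega⟩) := by
    intro m
    induction m with
    | zero =>
      intro _
      have he : (⟨0, by omega⟩ : Fin (q + 1)) = 0 := rfl
      rw [he]
    | succ k ih =>
      intro h1
      have hkq : k < q := by omega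
      refine (ih (by omega)).tail ?_
      have hne : (⟨k, hkq⟩ : Fin q) ≠ t₀ := by
        intro hc
        have := congrArg Fin.val hc
        simp at this; omega
      have := hstep ⟨k, hkq⟩ hne
      simpa [Fin.castSucc_mk, Fin.succ_mk] using this
  have h1 := hA q (by omega) le_rfl
  have h2 := hB (t₀ : ℕ) le_rfl
  have hq' : (⟨q, by omega⟩ : Fin (q + 1)) = Fin.last q := rfl
  rw [hq', hlast] at h1
  have hc : (⟨(t₀ : ℕ), by omega⟩ : Fin (q + 1)) = t₀.castSucc := by
    ext; simp
  rw [hc] at h2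
  exact h1.trans h2

lemma forest_pair_connected (H' T : PlainHypergraph V)
    (hT : H'.IsSpanningHyperforest T) {i j : V} (hij : i ≠ j)
    (he : ({i, j} : Finset V) ∈ H'.edges) :
    Relation.ReflTransGen T.Adjacent i j := by
  obtain ⟨hv, hsub, hacyc, hmax⟩ := hT
  by_cases heT : ({i, j} : Finset V) ∈ T.edges
  · exact Relation.ReflTransGen.single ⟨_, heT, by simp, by simp⟩
  have hT'sub : ∀ e' ∈ insert ({i, j} : Finset V) T.edges, e' ⊆ T.verts := by
    intro e' he'
    rcases Finset.mem_insert.mp he' with rfl | h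
    · rw [hv]; exact H'.edge_subset _ he
    · exact T.edge_subset _ h
  set T' : PlainHypergraph V := ⟨T.verts, insert ({i, j} : Finset V) T.edges, hT'sub⟩ with hT'
  have hnot : ¬ T'.Acyclic := by
    intro hacyc'
    have heq := hmax T' (by simpa using hv) (Finset.insert_subset he hsub) hacyc'
      (Finset.subset_insert _ _)
    exact heT (heq ▸ Finset.mem_insert_self _ T.edges)
  obtain ⟨q, v, ed, hq, hvinj, heinj, hlast, hmem⟩ := not_not.mp hnot
  by_cases hall : ∀ t, ed t ∈ T.edges
  · exact absurd ⟨q, v, ed, hq, hvinj, heinj, hlast,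
      fun t => ⟨hall t, (hmem t).2.1, (hmem t).2.2⟩⟩ hacyc
  push_neg at hall
  obtain ⟨t₀, ht₀⟩ := hall
  have het₀ : ed t₀ = ({i, j} : Finset V) := by
    rcases Finset.mem_insert.mp (hmem t₀).1 with h | h
    · exact h
    · exact absurd h ht₀
  have hstep : ∀ t, t ≠ t₀ → T.Adjacent (v t.castSucc) (v t.succ) := by
    intro t ht
    have hmem' := hmem t
    have hTe : ed t ∈ T.edges := by
      rcases Finset.mem_insert.mp hmem'.1 with h | h
      · exact absurd (heinj (h.trans het₀.symm)) ht
      · exact h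
    exact ⟨ed t, hTe, hmem'.2.1, hmem'.2.2⟩
  have hconn := cycle_connects T v ed hq hlast t₀ hstep
  have hc : v t₀.castSucc ∈ ({i, j} : Finset V) := het₀ ▸ (hmem t₀).2.1
  have hs : v t₀.succ ∈ ({i, j} : Finset V) := het₀ ▸ (hmem t₀).2.2
  have hne : v t₀.castSucc ≠ v t₀.succ := by
    rcases Nat.lt_or_ge ((t₀ : ℕ) + 1) q with h | h
    · intro hEq
      have hsucc : v t₀.succ = v (⟨(t₀ : ℕ) + 1, h⟩ : Fin q).castSucc := by
        have : t₀.succ = (⟨(t₀ : ℕ) + 1, h⟩ : Fin q).castSucc := by ext; simp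
        rw [this]
      rw [hsucc] at hEq
      have := hvinj hEq
      have := congrArg Fin.val this
      simp at this
    · intro hEq
      have ht := t₀.isLt
      have hlast' : t₀.succ = Fin.last q := by
        ext; simp only [Fin.val_succ, Fin.val_last]; omega
      have h0 : (0 : Fin (q + 1)) = (⟨0, by omega⟩ : Fin q).castSucc := rfl
      rw [hlast', hlast, h0] at hEq
      have := hvinj hEq
      have := congrArg Fin.val this
      simp at this
      omega
  have hsymmT : Symmetric T.Adjacent := fun x y ⟨e0, h0, hx, hy⟩ => ⟨e0, h0, hy, hx⟩
  have hc' : v t₀.castSucc = i ∨ v t₀.castSucc = j := by simpa using hc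
  have hs' : v t₀.succ = i ∨ v t₀.succ = j := by simpa using hs
  rcases hc' with h1 | h1 <;> rcases hs' with h2 | h2
  · exact absurd (h1.trans h2.symm) hne
  · rw [h1, h2] at hconn
    haveI : Std.Symm T.Adjacent := ⟨hsymmT⟩
    exact Std.Symm.symm _ _ hconn
  · rw [h1, h2] at hconn
    exact hconn
  · exact absurd (h1.trans h2.symm) hne

end Graph

end Stmt12Aux2

theorem stmt12 (n : ℕ) (a : Matrix (Fin n) (Fin n) ℝ) (hsym : ∀ i j, a i j = a j i)
    (M : Matrix (Fin n) (Fin n) ℝ) (hM : M.IsSymm)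
    (hquad : ∀ x : Fin n → ℝ,
      x ⬝ᵥ M.mulVec x = ∑ i : Fin n, ∑ j : Fin n, a i j * (x i - x j) ^ 2)
    (H H' T : PlainHypergraph (Fin n))
    (hHv : H.verts = Finset.univ) (hH'v : H'.verts = Finset.univ)
    (hHe : H.edges = Finset.univ.filter fun e : Finset (Fin n) =>
      ∃ i j : Fin n, i ≠ j ∧ a i j ≠ 0 ∧ e = {i, j})
    (hH'e : H'.edges = Finset.univ.filter fun e : Finset (Fin n) =>
      ∃ i j : Fin n, i ≠ j ∧ 0 < a i j ∧ e = {i, j})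
    (hT : H'.IsSpanningHyperforest T) :
    (posInertia M : ℤ) ≤ ∑ e ∈ T.edges, ((e.card : ℤ) - 1) ∧
      ∑ e ∈ T.edges, ((e.card : ℤ) - 1) ≤ ∑ e ∈ H'.edges, ((e.card : ℤ) - 1) ∧
        ∑ e ∈ H'.edges, ((e.card : ℤ) - 1) ≤ (posInertia M : ℤ) + H.cyclomatic := by
  classical
  have hMh : M.IsHermitian := by
    rw [Matrix.IsHermitian, Matrix.conjTranspose_eq_transpose_of_trivial]
    exact hM
  -- pair structure of edges
  have hH'pair : ∀ e ∈ H'.edges, ∃ i j : Fin n, i ≠ j ∧ 0 < a i j ∧ e = {i, j} := by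
    intro e he
    have : e ∈ Finset.univ.filter fun e : Finset (Fin n) =>
        ∃ i j : Fin n, i ≠ j ∧ 0 < a i j ∧ e = {i, j} := by rw [← hH'e]; exact he
    exact (Finset.mem_filter.mp this).2
  have hHpair : ∀ e ∈ H.edges, ∃ i j : Fin n, i ≠ j ∧ a i j ≠ 0 ∧ e = {i, j} := by
    intro e he
    have : e ∈ Finset.univ.filter fun e : Finset (Fin n) =>
        ∃ i j : Fin n, i ≠ j ∧ a i j ≠ 0 ∧ e = {i, j} := by rw [← hHe]; exact he
    exact (Finset.mem_filter.mp this).2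
  have hTsub : T.edges ⊆ H'.edges := hT.2.1
  have hH'H : H'.edges ⊆ H.edges := by
    intro e he
    obtain ⟨i, j, hij, ha, rfl⟩ := hH'pair e he
    rw [hHe]
    exact Finset.mem_filter.mpr ⟨Finset.mem_univ _, i, j, hij, ne_of_gt ha, rfl⟩
  set Eneg : Finset (Finset (Fin n)) := H.edges \ H'.edges with hEnegDef
  have hNegpair : ∀ e ∈ Eneg, ∃ i j : Fin n, i ≠ j ∧ a i j < 0 ∧ e = {i, j} := by
    intro e he
    obtain ⟨heH, heH'⟩ := Finset.mem_sdiff.mp he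
    obtain ⟨i, j, hij, ha, rfl⟩ := hHpair e heH
    refine ⟨i, j, hij, ?_, rfl⟩
    rcases lt_or_gt_of_ne ha with h | h
    · exact h
    · exact absurd (by
        rw [hH'e]
        exact Finset.mem_filter.mpr ⟨Finset.mem_univ _, i, j, hij, h, rfl⟩) heH'
  have hNegmem : ∀ i j : Fin n, i ≠ j → a i j < 0 →
      ({i, j} : Finset (Fin n)) ∈ Eneg := by
    intro i j hij h
    refine Finset.mem_sdiff.mpr ⟨?_, ?_⟩
    · rw [hHe]
      exact Finset.mem_filter.mpr ⟨Finset.mem_univ _, i, j, hij, ne_of_lt h, rfl⟩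
    · rw [hH'e]
      simp only [Finset.mem_filter, Finset.mem_univ, true_and, not_exists]
      intro i' j'
      rintro ⟨hij', ha', hee⟩
      have hi' : i' ∈ ({i, j} : Finset (Fin n)) := by rw [hee]; simp
      have hj' : j' ∈ ({i, j} : Finset (Fin n)) := by rw [hee]; simp
      have hi'' : i' = i ∨ i' = j := by simpa using hi'
      have hj'' : j' = i ∨ j' = j := by simpa using hj'
      rcases hi'' with rfl | rfl <;> rcases hj'' with rfl | rfl
      · exact hij' rfl
      · exact absurd ha' (not_lt.mpr h.le)
      · exact absurd ha' (not_lt.mpr (by rw [hsym]; exact h.le))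
      · exact hij' rfl
  -- sum over edge sets of (card - 1) equals number of edges
  have hsum : ∀ s : Finset (Finset (Fin n)),
      (∀ e ∈ s, ∃ i j : Fin n, i ≠ j ∧ e = {i, j}) →
      ∑ e ∈ s, ((e.card : ℤ) - 1) = s.card := by
    intro s hs
    rw [Finset.sum_congr rfl (fun e he => ?_), Finset.sum_const, nsmul_eq_mul, mul_one]
    obtain ⟨i, j, hij, rfl⟩ := hs e he
    rw [Finset.card_pair hij]
    norm_num
  have hsumT : ∑ e ∈ T.edges, ((e.card : ℤ) - 1) = T.edges.card :=
    hsum _ (fun e he => by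
      obtain ⟨i, j, hij, _, h⟩ := hH'pair e (hTsub he); exact ⟨i, j, hij, h⟩)
  have hsumH' : ∑ e ∈ H'.edges, ((e.card : ℤ) - 1) = H'.edges.card :=
    hsum _ (fun e he => by
      obtain ⟨i, j, hij, _, h⟩ := hH'pair e he; exact ⟨i, j, hij, h⟩)
  have hsumH : ∑ e ∈ H.edges, ((e.card : ℤ) - 1) = H.edges.card :=
    hsum _ (fun e he => by
      obtain ⟨i, j, hij, _, h⟩ := hHpair e he; exact ⟨i, j, hij, h⟩)
  -- Goal 1
  obtain ⟨f, g, hfg⟩ := Stmt12Aux2.exists_pair_fun (s := T.edges) (fun e he => by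
    obtain ⟨i, j, hij, _, h⟩ := hH'pair e (hTsub he); exact ⟨i, j, hij, h⟩)
  set φ := Stmt12Aux2.diffMap T.edges f g with hφ
  set K := LinearMap.ker φ with hK
  have hKedge : ∀ x ∈ K, ∀ e ∈ T.edges, ∀ u ∈ e, ∀ w ∈ e, x u = x w := by
    intro x hx e he u hu w hw
    have h0 : x (f ⟨e, he⟩) - x (g ⟨e, he⟩) = 0 :=
      congrFun (LinearMap.mem_ker.mp hx) ⟨e, he⟩
    exact Stmt12Aux2.pair_eq_of_eq (hfg ⟨e, he⟩).2 (by linarith) u hu w hw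
  have hKconst : ∀ x ∈ K, ∀ u v : Fin n,
      Relation.ReflTransGen T.Adjacent u v → x u = x v := by
    intro x hx u v h
    induction h with
    | refl => rfl
    | tail hab hbc ih =>
      obtain ⟨e, he, hb, hc⟩ := hbc
      exact ih.trans (hKedge x hx e he _ hb _ hc)
  have hKneg : ∀ x ∈ K, x ⬝ᵥ M.mulVec x ≤ 0 := by
    intro x hx
    rw [hquad]
    refine Finset.sum_nonpos fun i _ => Finset.sum_nonpos fun j _ => ?_
    by_cases hij : i = j
    · subst hij; simp
    by_cases ha : 0 < a i j
    · have hmem : ({i, j} : Finset (Fin n)) ∈ H'.edges := by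
        rw [hH'e]
        exact Finset.mem_filter.mpr ⟨Finset.mem_univ _, i, j, hij, ha, rfl⟩
      have hconn := Stmt12Aux2.forest_pair_connected H' T hT hij hmem
      rw [hKconst x hx i j hconn]
      simp
    · exact mul_nonpos_of_nonpos_of_nonneg (not_lt.mp ha) (sq_nonneg _)
  have hG1 : posInertia M + Module.finrank ℝ K ≤ n :=
    Stmt12Aux.posInertia_add_finrank_le hMh K hKneg
  have hG1' : n ≤ Module.finrank ℝ K + T.edges.card := by
    have := Stmt12Aux2.n_le_finrank_ker_add φ
    simpa [Fintype.card_coe] using this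
  -- Goal 3 setup
  obtain ⟨f2, g2, hfg2⟩ := Stmt12Aux2.exists_pair_fun (s := Eneg) (fun e he => by
    obtain ⟨i, j, hij, _, h⟩ := hNegpair e he; exact ⟨i, j, hij, h⟩)
  set ψ := Stmt12Aux2.diffMap Eneg f2 g2 with hψ
  set W := LinearMap.ker ψ with hW
  have hWedge : ∀ x ∈ W, ∀ e ∈ Eneg, ∀ u ∈ e, ∀ w ∈ e, x u = x w := by
    intro x hx e he u hu w hw
    have h0 : x (f2 ⟨e, he⟩) - x (g2 ⟨e, he⟩) = 0 :=
      congrFun (LinearMap.mem_ker.mp hx) ⟨e, he⟩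
    exact Stmt12Aux2.pair_eq_of_eq (hfg2 ⟨e, he⟩).2 (by linarith) u hu w hw
  have hWneg : ∀ x ∈ W, ∀ i j : Fin n, a i j < 0 → x i = x j := by
    intro x hx i j ha
    by_cases hij : i = j
    · rw [hij]
    · exact hWedge x hx _ (hNegmem i j hij ha) i (by simp) j (by simp)
  have htermnn : ∀ x ∈ W, ∀ i j : Fin n, 0 ≤ a i j * (x i - x j) ^ 2 := by
    intro x hx i j
    by_cases ha : a i j < 0
    · rw [hWneg x hx i j ha]; simp
    · exact mul_nonneg (not_lt.mp ha) (sq_nonneg _)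
  have hWnonneg : ∀ x ∈ W, 0 ≤ x ⬝ᵥ M.mulVec x := by
    intro x hx
    rw [hquad]
    exact Finset.sum_nonneg fun i _ => Finset.sum_nonneg fun j _ => htermnn x hx i j
  set Zc := Stmt12Aux2.constOn H.Adjacent with hZc
  have hWzero : ∀ x ∈ W, x ⬝ᵥ M.mulVec x = 0 → x ∈ Zc := by
    intro x hx hQ0
    rw [hquad] at hQ0
    have houter := (Finset.sum_eq_zero_iff_of_nonneg
      (fun i _ => Finset.sum_nonneg fun j _ => htermnn x hx i j)).mp hQ0
    have hterm0 : ∀ i j : Fin n, a i j * (x i - x j) ^ 2 = 0 := by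
      intro i j
      exact (Finset.sum_eq_zero_iff_of_nonneg
        (fun j _ => htermnn x hx i j)).mp (houter i (Finset.mem_univ i)) j (Finset.mem_univ j)
    rw [hZc, Stmt12Aux2.mem_constOn]
    intro u v h
    induction h with
    | refl => rfl
    | tail hab hbc ih =>
      refine ih.trans ?_
      obtain ⟨e, he, hb, hc⟩ := hbc
      obtain ⟨i, j, hij, ha, rfl⟩ := hHpair e he
      have hxij : x i = x j := by
        rcases lt_or_gt_of_ne ha with h' | h'
        · exact hWneg x hx i j h'
        · have := hterm0 i j
          rcases mul_eq_zero.mp this with h0 | h0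
          · exact absurd h0 (ne_of_gt h')
          · have := pow_eq_zero_iff (n := 2) (by norm_num) |>.mp h0
            linarith
      exact Stmt12Aux2.pair_eq_of_eq rfl hxij _ hb _ hc
  have hG3a : Module.finrank ℝ W ≤ posInertia M + Module.finrank ℝ Zc :=
    Stmt12Aux.finrank_le_posInertia_add hMh W Zc hWnonneg hWzero
  have hG3b : n ≤ Module.finrank ℝ W + Eneg.card := by
    have := Stmt12Aux2.n_le_finrank_ker_add ψ
    simpa [Fintype.card_coe] using this
  have hZle : Module.finrank ℝ Zc ≤ H.ncomp := by
    rw [PlainHypergraph.ncomp]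
    have hcompeq : {C : Set (Fin n) | ∃ v, C = {u | Relation.ReflTransGen H.Adjacent v u}} =
        {C : Set (Fin n) | ∃ v ∈ H.verts, C = {u | Relation.ReflTransGen H.Adjacent v u}} := by
      ext C; simp [hHv]
    rw [← hcompeq]
    exact Stmt12Aux2.finrank_constOn_le _
  have hcards : Eneg.card + H'.edges.card = H.edges.card :=
    Finset.card_sdiff_add_card_eq_card hH'H
  refine ⟨?_, ?_, ?_⟩
  · rw [hsumT]
    have : posInertia M ≤ T.edges.card := by omega
    exact_mod_cast this
  · rw [hsumT, hsumH']
    exact_mod_cast Finset.card_le_card hTsub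
  · rw [PlainHypergraph.cyclomatic, hsumH, hsumH', hHv, Finset.card_univ, Fintype.card_fin]
    have h1 : H'.edges.card + n ≤ posInertia M + H.edges.card + H.ncomp := by omega
    push_cast
    omega
end

section
/- Let x be a tree-like vertex of a hypergraph H = (V,E) and let y ≠ x be another vertex. Then x is still tree-like in the hypergraph H∖{y} obtained by removing y and all edges incident to y. -/
attribute [local instance] Classical.propDecidable

open Finset Matrix

/-! ## Auxiliary development for stmt13 -/

namespace PlainHypergraph

variable {V : Type} [DecidableEq V]

/-- The connected component of a vertex. -/
def comp (H : PlainHypergraph V) (v : V) : Set V := {u | Relation.ReflTransGen H.Adjacent v u}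

lemma mem_comp {H : PlainHypergraph V} {v u : V} :
    u ∈ H.comp v ↔ Relation.ReflTransGen H.Adjacent v u := Iff.rfl

lemma mem_comp_self (H : PlainHypergraph V) (v : V) : v ∈ H.comp v :=
  Relation.ReflTransGen.refl

lemma adj_symm (H : PlainHypergraph V) {a b : V} (h : H.Adjacent a b) : H.Adjacent b a := by
  obtain ⟨e, he, ha, hb⟩ := h; exact ⟨e, he, hb, ha⟩

lemma reach_symm (H : PlainHypergraph V) {a b : V}
    (h : Relation.ReflTransGen H.Adjacent a b) : Relation.ReflTransGen H.Adjacent b a :=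
  haveI : Std.Symm H.Adjacent := ⟨fun _ _ h' => H.adj_symm h'⟩
  Std.Symm.symm _ _ h

lemma comp_congr (H : PlainHypergraph V) {a b : V} (h : Relation.ReflTransGen H.Adjacent a b) :
    H.comp a = H.comp b := by
  ext u
  exact ⟨fun h' => Relation.ReflTransGen.trans (H.reach_symm h) h',
         fun h' => Relation.ReflTransGen.trans h h'⟩

lemma comp_of_mem (H : PlainHypergraph V) {v w : V} (h : w ∈ H.comp v) :
    H.comp w = H.comp v := (H.comp_congr h).symm

lemma ncomp_eq_card (H : PlainHypergraph V) :
    H.ncomp = (H.verts.image H.comp).card := by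
  rw [← Set.ncard_coe_finset]
  unfold ncomp
  congr 1
  ext C
  simp only [Set.mem_setOf_eq, Finset.coe_image, Set.mem_image, Finset.mem_coe]
  constructor
  · rintro ⟨v, hv, rfl⟩; exact ⟨v, hv, rfl⟩
  · rintro ⟨v, hv, rfl⟩; exact ⟨v, hv, rfl⟩

lemma erase_adj_iff (H : PlainHypergraph V) (x : V) {a b : V} :
    (H.induced (H.verts.erase x)).Adjacent a b ↔ H.Adjacent a b ∧ a ≠ x ∧ b ≠ x := by
  constructor
  · rintro ⟨e', he', ha, hb⟩
    simp only [induced, Finset.mem_image, Finset.mem_filter] at he'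
    obtain ⟨e, ⟨he, -⟩, rfl⟩ := he'
    rcases Finset.mem_inter.mp ha with ⟨hae, haA⟩
    rcases Finset.mem_inter.mp hb with ⟨hbe, hbA⟩
    exact ⟨⟨e, he, hae, hbe⟩, (Finset.mem_erase.mp haA).1, (Finset.mem_erase.mp hbA).1⟩
  · rintro ⟨⟨e, he, hae, hbe⟩, hax, hbx⟩
    have haA : a ∈ H.verts.erase x := Finset.mem_erase.mpr ⟨hax, H.edge_subset e he hae⟩
    have hbA : b ∈ H.verts.erase x := Finset.mem_erase.mpr ⟨hbx, H.edge_subset e he hbe⟩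
    refine ⟨e ∩ H.verts.erase x, ?_, Finset.mem_inter.mpr ⟨hae, haA⟩,
      Finset.mem_inter.mpr ⟨hbe, hbA⟩⟩
    simp only [induced, Finset.mem_image, Finset.mem_filter]
    exact ⟨e, ⟨he, ⟨a, Finset.mem_inter.mpr ⟨hae, haA⟩⟩⟩, rfl⟩

lemma erase_reach_mono (H : PlainHypergraph V) (x : V) {a b : V}
    (h : Relation.ReflTransGen (H.induced (H.verts.erase x)).Adjacent a b) :
    Relation.ReflTransGen H.Adjacent a b :=
  Relation.ReflTransGen.mono (fun _ _ h' => ((H.erase_adj_iff x).mp h').1) _ _ h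

lemma reach_erase_of_not_reach (H : PlainHypergraph V) (x : V) {v u : V}
    (hv : ¬ Relation.ReflTransGen H.Adjacent x v)
    (h : Relation.ReflTransGen H.Adjacent v u) :
    Relation.ReflTransGen (H.induced (H.verts.erase x)).Adjacent v u := by
  induction h with
  | refl => exact Relation.ReflTransGen.refl
  | @tail b c hb hadj ih =>
    refine ih.tail ((H.erase_adj_iff x).mpr ⟨hadj, ?_, ?_⟩)
    · rintro rfl; exact hv (H.reach_symm hb)
    · rintro rfl; exact hv (H.reach_symm (hb.tail hadj))

lemma reach_witness (H : PlainHypergraph V) (x : V) {v : V}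
    (h : Relation.ReflTransGen H.Adjacent x v) :
    v ≠ x → ∃ e ∈ H.edges, x ∈ e ∧ ∃ w ∈ e, w ≠ x ∧
      Relation.ReflTransGen (H.induced (H.verts.erase x)).Adjacent w v := by
  induction h with
  | refl => exact fun hv => absurd rfl hv
  | @tail b c hb hadj ih =>
    intro hcx
    by_cases hbx : b = x
    · subst hbx
      obtain ⟨e, he, hbe, hce⟩ := hadj
      exact ⟨e, he, hbe, c, hce, hcx, Relation.ReflTransGen.refl⟩
    · obtain ⟨e, he, hxe, w, hwe, hwx, hwb⟩ := ih hbx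
      exact ⟨e, he, hxe, w, hwe, hwx, hwb.tail ((H.erase_adj_iff x).mpr ⟨hadj, hbx, hcx⟩)⟩

/-- The components of `H - x` consisting of vertices `H`-reachable from `x`. -/
noncomputable def split (H : PlainHypergraph V) (x : V) : Finset (Set V) :=
  ((H.verts.erase x).filter fun v => Relation.ReflTransGen H.Adjacent x v).image
    (H.induced (H.verts.erase x)).comp

lemma decomp (H : PlainHypergraph V) (x : V) (hx : x ∈ H.verts) :
    (H.induced (H.verts.erase x)).ncomp + 1 = H.ncomp + (H.split x).card := by
  classical
  have hverts : (H.induced (H.verts.erase x)).verts = H.verts.erase x :=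
    Finset.inter_eq_right.mpr (Finset.erase_subset x H.verts)
  rw [H.ncomp_eq_card, (H.induced (H.verts.erase x)).ncomp_eq_card, hverts, split]
  have key0 : ∀ v ∈ H.verts.erase x, ¬ Relation.ReflTransGen H.Adjacent x v →
      (H.induced (H.verts.erase x)).comp v = H.comp v := by
    intro v _ hnv
    ext u
    exact ⟨fun h => H.erase_reach_mono x h, fun h => H.reach_erase_of_not_reach x hnv h⟩
  have hun : (H.verts.erase x).image (H.induced (H.verts.erase x)).comp =
      (((H.verts.erase x).filter fun v => Relation.ReflTransGen H.Adjacent x v).image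
        (H.induced (H.verts.erase x)).comp) ∪
      (((H.verts.erase x).filter fun v => ¬ Relation.ReflTransGen H.Adjacent x v).image
        (H.induced (H.verts.erase x)).comp) := by
    rw [← Finset.image_union, Finset.filter_union_filter_not_eq]
  have hdisj : Disjoint
      (((H.verts.erase x).filter fun v => Relation.ReflTransGen H.Adjacent x v).image
        (H.induced (H.verts.erase x)).comp)
      (((H.verts.erase x).filter fun v => ¬ Relation.ReflTransGen H.Adjacent x v).image
        (H.induced (H.verts.erase x)).comp) := by
    rw [Finset.disjoint_left]
    rintro C hC1 hC0
    obtain ⟨w, hw, hEq⟩ := Finset.mem_image.mp hC1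
    obtain ⟨v, hv, rfl⟩ := Finset.mem_image.mp hC0
    have hvn := (Finset.mem_filter.mp hv).2
    have hwr := (Finset.mem_filter.mp hw).2
    have hwv : w ∈ (H.induced (H.verts.erase x)).comp v := by
      rw [← hEq]; exact (H.induced (H.verts.erase x)).mem_comp_self w
    exact hvn (hwr.trans (H.reach_symm (H.erase_reach_mono x (mem_comp.mp hwv))))
  have hS0 : ((H.verts.erase x).filter fun v => ¬ Relation.ReflTransGen H.Adjacent x v).image
      (H.induced (H.verts.erase x)).comp = (H.verts.image H.comp).erase (H.comp x) := by
    ext C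
    simp only [Finset.mem_image, Finset.mem_filter, Finset.mem_erase]
    constructor
    · rintro ⟨v, ⟨hvA, hnv⟩, rfl⟩
      have h1 : (H.induced (H.verts.erase x)).comp v = H.comp v :=
        key0 v (Finset.mem_erase.mpr hvA) hnv
      rw [h1]
      refine ⟨?_, ⟨v, hvA.2, rfl⟩⟩
      intro hCeq
      refine hnv (H.reach_symm ?_)
      have hx' : x ∈ H.comp x := H.mem_comp_self x
      rw [← hCeq] at hx'
      exact mem_comp.mp hx'
    · rintro ⟨hne, v, hv, rfl⟩
      have hnv : ¬ Relation.ReflTransGen H.Adjacent x v := fun h => hne (H.comp_congr h).symm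
      have hvx : v ≠ x := by rintro rfl; exact hne rfl
      exact ⟨v, ⟨⟨hvx, hv⟩, hnv⟩, key0 v (Finset.mem_erase.mpr ⟨hvx, hv⟩) hnv⟩
  have hmem : H.comp x ∈ H.verts.image H.comp := Finset.mem_image_of_mem H.comp hx
  have h1le : 1 ≤ (H.verts.image H.comp).card := Finset.card_pos.mpr ⟨_, hmem⟩
  rw [hun, Finset.card_union_of_disjoint hdisj, hS0, Finset.card_erase_of_mem hmem]
  omega

lemma split_spec (H : PlainHypergraph V) (x : V) {C : Set V} (hC : C ∈ H.split x) :
    ∃ e ∈ H.edges, x ∈ e ∧ ∃ w ∈ e, w ≠ x ∧ w ∈ C := by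
  rw [split] at hC
  obtain ⟨v, hv, rfl⟩ := Finset.mem_image.mp hC
  obtain ⟨hvA, hvr⟩ := Finset.mem_filter.mp hv
  have hvx : v ≠ x := (Finset.mem_erase.mp hvA).1
  obtain ⟨e, he, hxe, w, hwe, hwx, hwv⟩ := H.reach_witness x hvr hvx
  exact ⟨e, he, hxe, w, hwe, hwx, mem_comp.mpr ((H.induced (H.verts.erase x)).reach_symm hwv)⟩

lemma split_class (H : PlainHypergraph V) (x : V) {C : Set V} (hC : C ∈ H.split x) {w : V}
    (hw : w ∈ C) : C = (H.induced (H.verts.erase x)).comp w := by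
  rw [split] at hC
  obtain ⟨v, -, rfl⟩ := Finset.mem_image.mp hC
  exact ((H.induced (H.verts.erase x)).comp_of_mem hw).symm

lemma split_card_le (H : PlainHypergraph V) (x : V) : (H.split x).card ≤ H.degree x := by
  classical
  rw [degree]
  refine Finset.card_le_card_of_injOn
    (fun C => if h : ∃ e ∈ H.edges, x ∈ e ∧ ∃ w ∈ e, w ≠ x ∧ w ∈ C then h.choose else ∅)
    ?_ ?_
  · intro C hC
    simp only [dif_pos (H.split_spec x hC)]
    obtain ⟨h1, h2, -⟩ := (H.split_spec x hC).choose_spec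
    exact Finset.mem_filter.mpr ⟨h1, h2⟩
  · intro C₁ h₁ C₂ h₂ hEq
    simp only [dif_pos (H.split_spec x h₁), dif_pos (H.split_spec x h₂)] at hEq
    obtain ⟨he₁, hx₁, w₁, hw₁e, hw₁x, hw₁C⟩ := (H.split_spec x h₁).choose_spec
    obtain ⟨he₂, hx₂, w₂, hw₂e, hw₂x, hw₂C⟩ := (H.split_spec x h₂).choose_spec
    rw [hEq] at hw₁e
    have hadj : (H.induced (H.verts.erase x)).Adjacent w₁ w₂ :=
      (H.erase_adj_iff x).mpr ⟨⟨_, he₂, hw₁e, hw₂e⟩, hw₁x, hw₂x⟩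
    rw [H.split_class x h₁ hw₁C, H.split_class x h₂ hw₂C]
    exact (H.induced (H.verts.erase x)).comp_congr (Relation.ReflTransGen.single hadj)

/-- Every edge at `x` has a vertex other than `x`. -/
def NE' (H : PlainHypergraph V) (x : V) : Prop := ∀ e ∈ H.edges, x ∈ e → ∃ w ∈ e, w ≠ x

/-- Distinct edges at `x` are separated after deleting `x`. -/
def Sep (H : PlainHypergraph V) (x : V) : Prop :=
  ∀ e ∈ H.edges, ∀ f ∈ H.edges, x ∈ e → x ∈ f →
    ∀ w₁ ∈ e, ∀ w₂ ∈ f, w₁ ≠ x → w₂ ≠ x →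
      Relation.ReflTransGen (H.induced (H.verts.erase x)).Adjacent w₁ w₂ → e = f

lemma degree_le_split_card (H : PlainHypergraph V) (x : V)
    (hne : H.NE' x) (hsep : H.Sep x) : H.degree x ≤ (H.split x).card := by
  classical
  rw [degree]
  refine Finset.card_le_card_of_injOn
    (fun e => if h : ∃ w ∈ e, w ≠ x then (H.induced (H.verts.erase x)).comp h.choose else ∅)
    ?_ ?_
  · intro e he
    rcases Finset.mem_filter.mp he with ⟨heE, hxe⟩
    simp only [dif_pos (hne e heE hxe)]
    obtain ⟨hwe, hwx⟩ := (hne e heE hxe).choose_spec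
    rw [split]
    exact Finset.mem_image.mpr ⟨_, Finset.mem_filter.mpr
      ⟨Finset.mem_erase.mpr ⟨hwx, H.edge_subset e heE hwe⟩,
        Relation.ReflTransGen.single ⟨e, heE, hxe, hwe⟩⟩, rfl⟩
  · intro e₁ h₁ e₂ h₂ hEq
    rcases Finset.mem_filter.mp h₁ with ⟨he₁, hx₁⟩
    rcases Finset.mem_filter.mp h₂ with ⟨he₂, hx₂⟩
    simp only [dif_pos (hne e₁ he₁ hx₁), dif_pos (hne e₂ he₂ hx₂)] at hEq
    obtain ⟨hw₁e, hw₁x⟩ := (hne e₁ he₁ hx₁).choose_spec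
    obtain ⟨hw₂e, hw₂x⟩ := (hne e₂ he₂ hx₂).choose_spec
    have hreach : Relation.ReflTransGen (H.induced (H.verts.erase x)).Adjacent
        (hne e₁ he₁ hx₁).choose (hne e₂ he₂ hx₂).choose := by
      have : (hne e₂ he₂ hx₂).choose ∈
          (H.induced (H.verts.erase x)).comp (hne e₁ he₁ hx₁).choose := by
        rw [hEq]; exact (H.induced (H.verts.erase x)).mem_comp_self _
      exact mem_comp.mp this
    exact hsep e₁ he₁ e₂ he₂ hx₁ hx₂ _ hw₁e _ hw₂e hw₁x hw₂x hreach

lemma sep_of_card_le (H : PlainHypergraph V) (x : V)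
    (h : H.degree x ≤ (H.split x).card) : H.NE' x ∧ H.Sep x := by
  classical
  have hsurj := Finset.surj_on_of_inj_on_of_card_le
    (s := H.split x) (t := H.edges.filter fun e => x ∈ e)
    (fun C hC => (H.split_spec x hC).choose)
    (fun C hC => Finset.mem_filter.mpr
      ⟨(H.split_spec x hC).choose_spec.1, (H.split_spec x hC).choose_spec.2.1⟩)
    (fun C₁ C₂ hC₁ hC₂ hEq => by
      beta_reduce at hEq
      obtain ⟨he₁, hx₁, w₁, hw₁e, hw₁x, hw₁C⟩ := (H.split_spec x hC₁).choose_spec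
      obtain ⟨he₂, hx₂, w₂, hw₂e, hw₂x, hw₂C⟩ := (H.split_spec x hC₂).choose_spec
      rw [hEq] at hw₁e
      have hadj : (H.induced (H.verts.erase x)).Adjacent w₁ w₂ :=
        (H.erase_adj_iff x).mpr ⟨⟨_, he₂, hw₁e, hw₂e⟩, hw₁x, hw₂x⟩
      rw [H.split_class x hC₁ hw₁C, H.split_class x hC₂ hw₂C]
      exact (H.induced (H.verts.erase x)).comp_congr (Relation.ReflTransGen.single hadj))
    (by rw [degree] at h; exact h)
  constructor
  · intro e he hxe
    obtain ⟨C, hC, heq⟩ := hsurj e (Finset.mem_filter.mpr ⟨he, hxe⟩)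
    beta_reduce at heq
    obtain ⟨-, -, w, hwe, hwx, -⟩ := (H.split_spec x hC).choose_spec
    rw [← heq] at hwe
    exact ⟨w, hwe, hwx⟩
  · intro e he f hf hxe hxf w₁ hw₁e w₂ hw₂f hw₁x hw₂x hreach
    obtain ⟨Ce, hCe, heqe⟩ := hsurj e (Finset.mem_filter.mpr ⟨he, hxe⟩)
    obtain ⟨Cf, hCf, heqf⟩ := hsurj f (Finset.mem_filter.mpr ⟨hf, hxf⟩)
    beta_reduce at heqe heqf
    obtain ⟨-, -, we, hwee, hwex, hweC⟩ := (H.split_spec x hCe).choose_spec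
    obtain ⟨-, -, wf, hwff, hwfx, hwfC⟩ := (H.split_spec x hCf).choose_spec
    rw [← heqe] at hwee
    rw [← heqf] at hwff
    have hadje : (H.induced (H.verts.erase x)).Adjacent w₁ we :=
      (H.erase_adj_iff x).mpr ⟨⟨e, he, hw₁e, hwee⟩, hw₁x, hwex⟩
    have hadjf : (H.induced (H.verts.erase x)).Adjacent w₂ wf :=
      (H.erase_adj_iff x).mpr ⟨⟨f, hf, hw₂f, hwff⟩, hw₂x, hwfx⟩
    have hCC : Ce = Cf := by
      rw [H.split_class x hCe hweC, H.split_class x hCf hwfC]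
      refine (H.induced (H.verts.erase x)).comp_congr ?_
      exact (((H.induced (H.verts.erase x)).reach_symm
        (Relation.ReflTransGen.single hadje)).trans hreach).trans
        (Relation.ReflTransGen.single hadjf)
    subst hCC
    rw [heqe, heqf]
  
lemma deleteVert_reach_mono (H : PlainHypergraph V) (x y : V) {a b : V}
    (h : Relation.ReflTransGen
      ((H.deleteVert y).induced ((H.deleteVert y).verts.erase x)).Adjacent a b) :
    Relation.ReflTransGen (H.induced (H.verts.erase x)).Adjacent a b := by
  refine Relation.ReflTransGen.mono ?_ _ _ h
  intro u v huv
  rw [(H.deleteVert y).erase_adj_iff x] at huv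
  rw [H.erase_adj_iff x]
  obtain ⟨⟨e, he, hu, hv⟩, hux, hvx⟩ := huv
  rcases Finset.mem_filter.mp he with ⟨heH, -⟩
  exact ⟨⟨e, heH, hu, hv⟩, hux, hvx⟩

lemma sep_deleteVert (H : PlainHypergraph V) (x y : V) (h : H.Sep x) : (H.deleteVert y).Sep x := by
  intro e he f hf hxe hxf w₁ hw₁ w₂ hw₂ h1 h2 hr
  exact h e (Finset.mem_filter.mp he).1 f (Finset.mem_filter.mp hf).1 hxe hxf w₁ hw₁ w₂ hw₂ h1 h2
    (H.deleteVert_reach_mono x y hr)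

lemma ne'_deleteVert (H : PlainHypergraph V) (x y : V) (h : H.NE' x) : (H.deleteVert y).NE' x :=
  fun e he hxe => h e (Finset.mem_filter.mp he).1 hxe

lemma induced_self_adj (H : PlainHypergraph V) {a b : V} :
    (H.induced H.verts).Adjacent a b ↔ H.Adjacent a b := by
  constructor
  · rintro ⟨e', he', ha, hb⟩
    simp only [induced, Finset.mem_image, Finset.mem_filter] at he'
    obtain ⟨e, ⟨he, -⟩, rfl⟩ := he'
    exact ⟨e, he, (Finset.mem_inter.mp ha).1, (Finset.mem_inter.mp hb).1⟩
  · rintro ⟨e, he, ha, hb⟩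
    have hav : a ∈ H.verts := H.edge_subset e he ha
    have hbv : b ∈ H.verts := H.edge_subset e he hb
    exact ⟨e ∩ H.verts, Finset.mem_image.mpr ⟨e, Finset.mem_filter.mpr
      ⟨he, ⟨a, Finset.mem_inter.mpr ⟨ha, hav⟩⟩⟩, rfl⟩,
      Finset.mem_inter.mpr ⟨ha, hav⟩, Finset.mem_inter.mpr ⟨hb, hbv⟩⟩

lemma ncomp_induced_self (H : PlainHypergraph V) : (H.induced H.verts).ncomp = H.ncomp := by
  have hrel : (H.induced H.verts).Adjacent = H.Adjacent := by
    funext a b; exact propext H.induced_self_adj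
  have hv : (H.induced H.verts).verts = H.verts := Finset.inter_self _
  unfold ncomp
  rw [hrel, hv]

lemma degree_eq_zero (H : PlainHypergraph V) {x : V} (hx : x ∉ H.verts) : H.degree x = 0 := by
  rw [degree, Finset.card_eq_zero, Finset.filter_eq_empty_iff]
  exact fun {e} he hxe => hx (H.edge_subset e he hxe)

end PlainHypergraph

theorem stmt13 {V : Type} [DecidableEq V] (H : PlainHypergraph V) (x y : V) (hxy : y ≠ x)
    (htl : H.Treelike x) : (H.deleteVert y).Treelike x := by
  classical
  have hxV : x ∈ H.verts := by
    by_contra hx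
    rw [PlainHypergraph.Treelike, Finset.erase_eq_of_notMem hx, H.ncomp_induced_self,
      H.degree_eq_zero hx] at htl
    push_cast at htl
    omega
  rw [PlainHypergraph.Treelike] at htl
  have hdec := H.decomp x hxV
  have hcard : H.degree x ≤ (H.split x).card := by omega
  obtain ⟨hne, hsep⟩ := H.sep_of_card_le x hcard
  have hxV2 : x ∈ (H.deleteVert y).verts := Finset.mem_erase.mpr ⟨Ne.symm hxy, hxV⟩
  have hdec2 := (H.deleteVert y).decomp x hxV2
  have hle := (H.deleteVert y).split_card_le x
  have hge := (H.deleteVert y).degree_le_split_card x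
    (H.ne'_deleteVert x y hne) (H.sep_deleteVert x y hsep)
  rw [PlainHypergraph.Treelike]
  omega
end
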